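/- (Partition rank under field extension) Let K/F be a finite field extension of degree ℓ, and T a k-tensor (multilinear form) over F. Then PR(T) ≤ ℓ · PR(T^K), where T^K denotes T viewed as a tensor over K, and PR denotes partition rank (minimum number of reducible multilinear forms summing to T). -/

import Mathlib

open scoped TensorProduct


section Combine
variable {R M : Type*} [CommSemiring R] [AddCommMonoid M] [Module R M] {k : ℕ}

/-- The sum-splitting equivalence for a finset and its complement. -/
def mlSumEquiv (A : Finset (Fin k)) : {i // i ∈ A} ⊕ {i // i ∈ Aᶜ} ≃ Fin k :=
  (Equiv.sumCongr (Equiv.refl _) (Equiv.subtypeEquivRight fun i => Finset.mem_compl)).trans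
    (Equiv.sumCompl (· ∈ A))

@[simp] lemma mlSumEquiv_inl (A : Finset (Fin k)) (a : {i // i ∈ A}) :
    mlSumEquiv A (Sum.inl a) = a.1 := rfl

@[simp] lemma mlSumEquiv_inr (A : Finset (Fin k)) (b : {i // i ∈ Aᶜ}) :
    mlSumEquiv A (Sum.inr b) = b.1 := rfl

/-- Combine multilinear forms on complementary slot sets into one multilinear form. -/
noncomputable def mlCombine (A : Finset (Fin k))
    (P : MultilinearMap R (fun _ : {i // i ∈ A} => M) R)
    (Q : MultilinearMap R (fun _ : {i // i ∈ Aᶜ} => M) R) :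
    MultilinearMap R (fun _ : Fin k => M) R :=
  (LinearMap.mul' R R).compMultilinearMap ((P.domCoprod Q).domDomCongr (mlSumEquiv A))

lemma mlCombine_apply (A : Finset (Fin k))
    (P : MultilinearMap R (fun _ : {i // i ∈ A} => M) R)
    (Q : MultilinearMap R (fun _ : {i // i ∈ Aᶜ} => M) R) (x : Fin k → M) :
    mlCombine A P Q x = P (fun i => x i.1) * Q (fun j => x j.1) := by
  simp [mlCombine, MultilinearMap.domDomCongr_apply, MultilinearMap.domCoprod_apply]

end Combine

section Instances
variable {R ι : Type*} {M₁ : ι → Type*} {M₂ : Type*} [Semiring R]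
  [∀ i, AddCommMonoid (M₁ i)] [AddCommMonoid M₂] [∀ i, Module R (M₁ i)] [Module R M₂]
  {S A : Type*} [Semiring S] [Semiring A] [Module S M₂] [Module A M₂]
  [SMulCommClass R S M₂] [SMulCommClass R A M₂]

instance instSMulCommClassML [SMulCommClass S A M₂] :
    SMulCommClass S A (MultilinearMap R M₁ M₂) :=
  ⟨fun c a f => MultilinearMap.ext fun x => smul_comm c a (f x)⟩

instance instIsScalarTowerML [SMul S A] [IsScalarTower S A M₂] :
    IsScalarTower S A (MultilinearMap R M₁ M₂) :=
  ⟨fun c a f => MultilinearMap.ext fun x => smul_assoc c a (f x)⟩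

end Instances

section BC
variable (F K V : Type*) [Field F] [Field K] [Algebra F K] [AddCommGroup V] [Module F V]

/-- Base change of a multilinear form, defined by induction on the number of slots. -/
noncomputable def mlBaseChange : ∀ n : ℕ,
    MultilinearMap F (fun _ : Fin n => V) F →ₗ[F]
      MultilinearMap K (fun _ : Fin n => K ⊗[F] V) K
  | 0 =>
    ((MultilinearMap.constLinearEquivOfIsEmpty (R := K) (S := K)
        (M₁ := fun _ : Fin 0 => K ⊗[F] V) (M₂ := K)).toLinearMap.restrictScalars F)
      ∘ₗ (Algebra.linearMap F K)
      ∘ₗ (MultilinearMap.constLinearEquivOfIsEmpty (R := F) (S := F)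
        (M₁ := fun _ : Fin 0 => V) (M₂ := F)).symm.toLinearMap
  | (n+1) =>
    (((multilinearCurryLeftEquiv K (fun _ : Fin (n+1) => K ⊗[F] V) K).symm.restrictScalars
        F).toLinearMap)
      ∘ₗ (((LinearMap.liftBaseChangeEquiv (R := F) (M := V)
          (N := MultilinearMap K (fun _ : Fin n => K ⊗[F] V) K) K).restrictScalars F).toLinearMap)
      ∘ₗ (LinearMap.llcomp F V _ _ (mlBaseChange n))
      ∘ₗ (multilinearCurryLeftEquiv F (fun _ : Fin (n+1) => V) F).toLinearMap

lemma mlBaseChange_one_tmul : ∀ (n : ℕ) (P : MultilinearMap F (fun _ : Fin n => V) F)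
    (v : Fin n → V),
    mlBaseChange F K V n P (fun i => (1 : K) ⊗ₜ[F] v i) = algebraMap F K (P v)
  | 0, P, v => by
    simp only [mlBaseChange, LinearMap.coe_comp, Function.comp_apply,
      LinearMap.coe_restrictScalars, LinearEquiv.coe_coe]
    simp only [MultilinearMap.constLinearEquivOfIsEmpty_apply,
      MultilinearMap.constOfIsEmpty_apply, Algebra.linearMap_apply]
    exact congrArg (algebraMap F K) (congrArg P (Subsingleton.elim _ _))
  | (n+1), P, v => by
    simp only [mlBaseChange, LinearMap.coe_comp, Function.comp_apply,
      LinearMap.coe_restrictScalars, LinearEquiv.coe_coe]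
    rw [LinearEquiv.restrictScalars_apply, LinearEquiv.restrictScalars_apply]
    show (LinearMap.uncurryLeft _) _ = _
    rw [LinearMap.uncurryLeft_apply]
    rw [LinearMap.liftBaseChange_tmul, one_smul]
    show mlBaseChange F K V n (P.curryLeft (v 0)) (fun i => (1:K) ⊗ₜ[F] Fin.tail v i) = _
    rw [mlBaseChange_one_tmul n]
    rw [MultilinearMap.curryLeft_apply, Fin.cons_self_tail]

end BC

/-- A multilinear form `S : M^k → R` is reducible if it is the product of two multilinear
forms depending on complementary nonempty subsets of the argument slots. -/
def MLReducible {R M : Type*} [CommSemiring R] [AddCommMonoid M] [Module R M] {k : ℕ}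
    (S : MultilinearMap R (fun _ : Fin k => M) R) : Prop :=
  ∃ A : Finset (Fin k), A.Nonempty ∧ Aᶜ.Nonempty ∧
    ∃ (P : MultilinearMap R (fun _ : {i // i ∈ A} => M) R)
      (Q : MultilinearMap R (fun _ : {i // i ∈ Aᶜ} => M) R),
      ∀ x, S x = P (fun i => x i.1) * Q (fun j => x j.1)

/-- The partition rank: the minimum number of reducible multilinear forms summing to `T`. -/
noncomputable def partitionRank {R M : Type*} [CommSemiring R] [AddCommMonoid M]
    [Module R M] {k : ℕ} (T : MultilinearMap R (fun _ : Fin k => M) R) : ℕ :=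
  sInf {r | ∃ S : Fin r → MultilinearMap R (fun _ : Fin k => M) R,
    (∀ i, MLReducible (S i)) ∧ T = ∑ i, S i}

section Lift
variable {F K V : Type*} [Field F] [Field K] [Algebra F K] [AddCommGroup V] [Module F V] {k : ℕ}

/-- Lift a decomposition of `T` into reducibles to a decomposition of `TK`. -/
lemma exists_decomp_TK
    (T : MultilinearMap F (fun _ : Fin k => V) F)
    (TK : MultilinearMap K (fun _ : Fin k => K ⊗[F] V) K)
    (hTK : ∀ x : Fin k → V, TK (fun i => (1 : K) ⊗ₜ[F] x i) = algebraMap F K (T x))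
    (r₀ : ℕ) (S₀ : Fin r₀ → MultilinearMap F (fun _ : Fin k => V) F)
    (hred : ∀ i, MLReducible (S₀ i)) (hsum : T = ∑ i, S₀ i) :
    ∃ SK : Fin r₀ → MultilinearMap K (fun _ : Fin k => K ⊗[F] V) K,
      (∀ i, MLReducible (SK i)) ∧ TK = ∑ i, SK i := by
  classical
  choose A hA hAc P Q hPQ using hred
  let σ : ∀ i, {x // x ∈ A i} ≃ Fin ((A i).card) :=
    fun i => Fintype.equivFinOfCardEq (Fintype.card_coe _)
  let τ : ∀ i, {x // x ∈ (A i)ᶜ} ≃ Fin (((A i)ᶜ).card) :=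
    fun i => Fintype.equivFinOfCardEq (Fintype.card_coe _)
  let PK : ∀ i, MultilinearMap K (fun _ : {x // x ∈ A i} => K ⊗[F] V) K :=
    fun i => (mlBaseChange F K V _ ((P i).domDomCongr (σ i))).domDomCongr (σ i).symm
  let QK : ∀ i, MultilinearMap K (fun _ : {x // x ∈ (A i)ᶜ} => K ⊗[F] V) K :=
    fun i => (mlBaseChange F K V _ ((Q i).domDomCongr (τ i))).domDomCongr (τ i).symm
  refine ⟨fun i => mlCombine (A i) (PK i) (QK i),
    fun i => ⟨A i, hA i, hAc i, PK i, QK i, fun x => mlCombine_apply _ _ _ x⟩, ?_⟩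
  obtain ⟨b⟩ : Nonempty (Module.Basis (Module.Basis.ofVectorSpaceIndex F V) F V) :=
    ⟨Module.Basis.ofVectorSpace F V⟩
  apply Module.Basis.ext_multilinear (fun _ => b.baseChange K)
  intro v
  have hb : ∀ i : Fin k, (b.baseChange K) (v i) = (1 : K) ⊗ₜ[F] b (v i) :=
    fun i => Module.Basis.baseChange_apply ..
  simp only [hb]
  rw [hTK, hsum, MultilinearMap.sum_apply, map_sum, MultilinearMap.sum_apply]
  refine Finset.sum_congr rfl fun i _ => ?_
  rw [hPQ, map_mul, mlCombine_apply]
  congr 1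
  · show _ = PK i fun m => (1:K) ⊗ₜ[F] b (v m.1)
    simp only [PK, MultilinearMap.domDomCongr_apply]
    rw [mlBaseChange_one_tmul]
    simp [MultilinearMap.domDomCongr_apply]
  · show _ = QK i fun m => (1:K) ⊗ₜ[F] b (v m.1)
    simp only [QK, MultilinearMap.domDomCongr_apply]
    rw [mlBaseChange_one_tmul]
    simp [MultilinearMap.domDomCongr_apply]

end Lift

/-- Partition rank under field extension: if `K/F` is a field extension of finite degree
`ℓ` and `T^K` is the `K`-multilinear extension of `T` to `(K ⊗_F V)^k`, then
`PR(T) ≤ ℓ · PR(T^K)`. -/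
theorem stmt15 {F K V : Type*} [Field F] [Field K] [Algebra F K] [FiniteDimensional F K]
    {k ℓ : ℕ} (hl : Module.finrank F K = ℓ)
    [AddCommGroup V] [Module F V]
    (T : MultilinearMap F (fun _ : Fin k => V) F)
    (TK : MultilinearMap K (fun _ : Fin k => K ⊗[F] V) K)
    (hTK : ∀ x : Fin k → V, TK (fun i => (1 : K) ⊗ₜ[F] x i) = algebraMap F K (T x)) :
    partitionRank T ≤ ℓ * partitionRank TK := by
  classical
  rcases Set.eq_empty_or_nonempty {r | ∃ S : Fin r → MultilinearMap F (fun _ : Fin k => V) F,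
      (∀ i, MLReducible (S i)) ∧ T = ∑ i, S i} with hT | hT
  · have : partitionRank T = 0 := by
      rw [partitionRank, hT, Nat.sInf_empty]
    omega
  · -- the decomposition set for `TK` is nonempty
    obtain ⟨r₀, S₀, hred₀, hsum₀⟩ := hT
    obtain ⟨SK₀, hKred₀, hKsum₀⟩ := exists_decomp_TK T TK hTK r₀ S₀ hred₀ hsum₀
    have hKne : {r | ∃ S : Fin r → MultilinearMap K (fun _ : Fin k => K ⊗[F] V) K,
        (∀ i, MLReducible (S i)) ∧ TK = ∑ i, S i}.Nonempty := ⟨r₀, SK₀, hKred₀, hKsum₀⟩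
    have hmem : partitionRank TK ∈ {r | ∃ S : Fin r → MultilinearMap K
        (fun _ : Fin k => K ⊗[F] V) K, (∀ i, MLReducible (S i)) ∧ TK = ∑ i, S i} :=
      Nat.sInf_mem hKne
    generalize hgen : partitionRank TK = r at hmem ⊢
    obtain ⟨S, hSred, hSsum⟩ := hmem
    choose A hA hAc P Q hPQ using hSred
    -- a basis of K over F, and a retraction of the algebra map
    let e : Module.Basis (Fin ℓ) F K := (Module.finBasis F K).reindex (finCongr hl)
    obtain ⟨φ, hφ⟩ := (Algebra.linearMap F K).exists_leftInverse_of_injective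
      (LinearMap.ker_eq_bot.mpr (algebraMap F K).injective)
    have hφ' : ∀ a : F, φ (algebraMap F K a) = a := fun a => by
      have := congrArg (fun f => f a) (congrArg (fun f => f.toFun) hφ)
      simpa using this
    let ι1 : V →ₗ[F] K ⊗[F] V := TensorProduct.mk F K V 1
    let Pij := fun (i : Fin r) (j : Fin ℓ) =>
      (e.coord j).compMultilinearMap
        (((P i).restrictScalars F).compLinearMap (fun _ => ι1))
    let Qij := fun (i : Fin r) (j : Fin ℓ) =>
      (φ ∘ₗ LinearMap.mulLeft F (e j)).compMultilinearMap
        (((Q i).restrictScalars F).compLinearMap (fun _ => ι1))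
    let G : Fin ℓ × Fin r → MultilinearMap F (fun _ : Fin k => V) F :=
      fun p => mlCombine (A p.2) (Pij p.2 p.1) (Qij p.2 p.1)
    have hsum : T = ∑ p : Fin ℓ × Fin r, G p := by
      ext x
      have key : algebraMap F K (T x)
          = ∑ i, (P i fun m => (1:K) ⊗ₜ[F] x m.1) * (Q i fun m => (1:K) ⊗ₜ[F] x m.1) := by
        rw [← hTK x, hSsum, MultilinearMap.sum_apply]
        exact Finset.sum_congr rfl fun i _ => hPQ i _
      have hTx : T x = ∑ i : Fin r, ∑ j : Fin ℓ,
          (Pij i j fun m => x m.1) * (Qij i j fun m => x m.1) := by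
        calc T x = φ (algebraMap F K (T x)) := (hφ' _).symm
        _ = ∑ i, φ ((P i fun m => (1:K) ⊗ₜ[F] x m.1) * (Q i fun m => (1:K) ⊗ₜ[F] x m.1)) := by
            rw [key, map_sum]
        _ = _ := by
            refine Finset.sum_congr rfl fun i _ => ?_
            set a := P i fun m => (1:K) ⊗ₜ[F] x m.1 with ha
            set q := Q i fun m => (1:K) ⊗ₜ[F] x m.1 with hq
            have expand : a = ∑ j : Fin ℓ, e.repr a j • e j := (e.sum_repr a).symm
            calc φ (a * q) = φ ((∑ j : Fin ℓ, e.repr a j • e j) * q) := by rw [← expand]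
            _ = ∑ j : Fin ℓ, e.repr a j • φ (e j * q) := by
                rw [Finset.sum_mul, map_sum]
                exact Finset.sum_congr rfl fun j _ => by
                  rw [smul_mul_assoc, map_smul]
            _ = ∑ j : Fin ℓ, (Pij i j fun m => x m.1) * (Qij i j fun m => x m.1) := by
                refine Finset.sum_congr rfl fun j _ => ?_
                rw [smul_eq_mul]
                congr 1
      rw [hTx, MultilinearMap.sum_apply, Fintype.sum_prod_type, Finset.sum_comm]
      exact Finset.sum_congr rfl fun i _ => Finset.sum_congr rfl fun j _ =>
        (mlCombine_apply _ _ _ x).symm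
    have hfinal : ℓ * r ∈ {r' | ∃ S : Fin r' → MultilinearMap F (fun _ : Fin k => V) F,
        (∀ i, MLReducible (S i)) ∧ T = ∑ i, S i} := by
      refine ⟨fun t => G (finProdFinEquiv.symm t), fun t => ?_, ?_⟩
      · exact ⟨A (finProdFinEquiv.symm t).2, hA _, hAc _, Pij _ _, Qij _ _,
          fun x => mlCombine_apply _ _ _ x⟩
      · rw [hsum]
        exact Fintype.sum_equiv finProdFinEquiv (fun p => G p)
          (fun t => G (finProdFinEquiv.symm t)) (fun p => by simp)
    unfold partitionRank
    exact Nat.sInf_le hfinal
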